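/- Let F be a 2-graph and let ε > 0. Then there exist n₀ and δ > 0 (depending only on ε and F) such that for any vertex set V of size n = |V| > n₀, if G = (V,E) is a graph with |E| ≥ ex*(n,F) + ε·C(n,2) edges, then for every set of edges E₀ ⊆ V^(2) \ E there exists a subset X ⊆ E such that the graph (V, E₀ ∪ X) contains at least δ·n^{|F|} induced copies of F, i.e., at least δ·n^{|F|} vertex subsets U such that the induced subgraph of (V, E₀ ∪ X) on U is isomorphic to F. -/

import Mathlib

open Finset

/-- The set of all potential edges of an `r`-uniform hypergraph on vertex set `Fin n`:
the `r`-element subsets of the vertex set. -/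
def edgeUniv (r n : ℕ) : Finset (Finset (Fin n)) := Finset.powersetCard r Finset.univ

/-- `G` is an `r`-uniform hypergraph on `Fin n`: a set of `r`-element subsets of the vertices. -/
def IsRGraph (r n : ℕ) (G : Finset (Finset (Fin n))) : Prop := G ⊆ edgeUniv r n

/-- The probability that the random `r`-graph `G(n,p)` (each `r`-set being an edge
independently with probability `p`) belongs to the collection `A`. -/
noncomputable def prG (r n : ℕ) (p : ℝ) (A : Set (Finset (Finset (Fin n)))) : ℝ :=
  ∑ E ∈ (edgeUniv r n).powerset,
    Set.indicator A (fun E => p ^ E.card * (1 - p) ^ ((edgeUniv r n).card - E.card)) E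

/-- The `r`-graph `F` on `Fin k` appears as an induced subgraph of `G` (an `r`-graph on
`Fin n`) on the vertex subset `U`. -/
def IsInducedCopyAt (r k n : ℕ) (F : Finset (Finset (Fin k)))
    (G : Finset (Finset (Fin n))) (U : Finset (Fin n)) : Prop :=
  ∃ f : Fin k ↪ Fin n, Finset.univ.map f = U ∧
    ∀ e : Finset (Fin k), e.card = r → (e ∈ F ↔ e.map f ∈ G)

/-- `G` has an induced subgraph on the vertex subset `U` isomorphic to a member of the
family `Fam` (where `Fam k` is the set of members of the family on `k` vertices). -/
def HasCopyAt (r n : ℕ) (Fam : ∀ k, Set (Finset (Finset (Fin k))))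
    (G : Finset (Finset (Fin n))) (U : Finset (Fin n)) : Prop :=
  ∃ k, ∃ H ∈ Fam k, IsInducedCopyAt r k n H G U

/-- `Forb(Fam)ⁿ` : the `r`-graphs on `n` vertices with no induced subgraph isomorphic to a
member of `Fam`. -/
def ForbN (r : ℕ) (Fam : ∀ k, Set (Finset (Finset (Fin k)))) (n : ℕ) :
    Set (Finset (Finset (Fin n))) :=
  {G | IsRGraph r n G ∧ ∀ U, ¬ HasCopyAt r n Fam G U}

/-- A partial Steiner system with parameters `(r,m,n)`: a collection of `m`-element
subsets of `Fin n` such that every `r`-element subset is contained in at most one member. -/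
def IsSteiner (r m n : ℕ) (D : Finset (Finset (Fin n))) : Prop :=
  (∀ B ∈ D, B.card = m) ∧
  ∀ e : Finset (Fin n), e.card = r →
    ∀ B₁ ∈ D, ∀ B₂ ∈ D, e ⊆ B₁ → e ⊆ B₂ → B₁ = B₂

/-- `ex*(n,F)`: the maximum of `|E|` over pairs of edge-disjoint graphs `E`, `E₀` on `n`
vertices such that no graph `(V, E₀ ∪ X)` with `X ⊆ E` contains an induced copy of `F`. -/
noncomputable def exStar (v : ℕ) (F : Finset (Finset (Fin v))) (n : ℕ) : ℕ :=
  sSup {k : ℕ | ∃ E E₀ : Finset (Finset (Fin n)), IsRGraph 2 n E ∧ IsRGraph 2 n E₀ ∧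
    Disjoint E E₀ ∧
    (∀ X ⊆ E, ∀ U : Finset (Fin n), ¬ IsInducedCopyAt 2 v n F (E₀ ∪ X) U) ∧
    k = E.card}

lemma edgeUniv_card (n : ℕ) : (edgeUniv 2 n).card = n.choose 2 := by
  simp [edgeUniv, Finset.card_powersetCard]

lemma mem_edgeUniv {n : ℕ} {e : Finset (Fin n)} : e ∈ edgeUniv 2 n ↔ e.card = 2 := by
  simp [edgeUniv, Finset.mem_powersetCard]

lemma exStar_le_choose (v : ℕ) (F : Finset (Finset (Fin v))) (n : ℕ) :
    exStar v F n ≤ n.choose 2 := by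
  apply csSup_le'
  rintro k ⟨E, E₀, hE, -, -, -, rfl⟩
  calc E.card ≤ (edgeUniv 2 n).card := Finset.card_le_card hE
    _ = n.choose 2 := edgeUniv_card n

lemma exists_break {v : ℕ} {F : Finset (Finset (Fin v))} {m : ℕ}
    {E E₀ : Finset (Finset (Fin m))} (hE : IsRGraph 2 m E) (hE₀ : IsRGraph 2 m E₀)
    (hd : Disjoint E E₀) (h : exStar v F m < E.card) :
    ∃ X ⊆ E, ∃ U, IsInducedCopyAt 2 v m F (E₀ ∪ X) U := by
  by_contra hc
  push_neg at hc
  have hbdd : BddAbove {k : ℕ | ∃ E E₀ : Finset (Finset (Fin m)), IsRGraph 2 m E ∧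
      IsRGraph 2 m E₀ ∧ Disjoint E E₀ ∧
      (∀ X ⊆ E, ∀ U : Finset (Fin m), ¬ IsInducedCopyAt 2 v m F (E₀ ∪ X) U) ∧
      k = E.card} := by
    refine ⟨m.choose 2, ?_⟩
    rintro k ⟨E', E₀', hE', -, -, -, rfl⟩
    calc E'.card ≤ (edgeUniv 2 m).card := Finset.card_le_card hE'
      _ = m.choose 2 := edgeUniv_card m
  have : E.card ≤ exStar v F m := le_csSup hbdd ⟨E, E₀, hE, hE₀, hd, hc, rfl⟩
  omega

/-- restriction of a graph along an embedding -/
def resG {m n : ℕ} (g : Fin m ↪ Fin n) (G : Finset (Finset (Fin n))) :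
    Finset (Finset (Fin m)) :=
  (edgeUniv 2 m).filter (fun e => e.map g ∈ G)

lemma resG_isRGraph {m n : ℕ} (g : Fin m ↪ Fin n) (G : Finset (Finset (Fin n))) :
    IsRGraph 2 m (resG g G) := Finset.filter_subset _ _

lemma resG_disjoint {m n : ℕ} (g : Fin m ↪ Fin n) {G H : Finset (Finset (Fin n))}
    (h : Disjoint G H) : Disjoint (resG g G) (resG g H) := by
  rw [Finset.disjoint_left]
  intro e he he'
  simp only [resG, Finset.mem_filter] at he he'
  exact (Finset.disjoint_left.mp h) he.2 he'.2

lemma card_resG {m n : ℕ} (g : Fin m ↪ Fin n) {E : Finset (Finset (Fin n))}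
    (hE : IsRGraph 2 n E) :
    (resG g E).card = (E.filter (fun e => e ⊆ Finset.univ.map g)).card := by
  apply Finset.card_bij (fun e _ => e.map g)
  · intro e he
    simp only [resG, Finset.mem_filter, mem_edgeUniv] at he
    refine Finset.mem_filter.mpr ⟨he.2, ?_⟩
    exact Finset.map_subset_map.mpr (Finset.subset_univ e)
  · intro a ha b hb hab
    exact Finset.map_injective g hab
  · intro b hb
    simp only [Finset.mem_filter] at hb
    obtain ⟨u, -, rfl⟩ := Finset.subset_map_iff.mp hb.2
    refine ⟨u, ?_, rfl⟩
    simp only [resG, Finset.mem_filter, mem_edgeUniv]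
    have : u.card = 2 := by
      have := mem_edgeUniv.mp (hE hb.1)
      simpa [Finset.card_map] using this
    exact ⟨this, hb.1⟩

lemma good_subset {v n : ℕ} {F : Finset (Finset (Fin v))} {E E₀ : Finset (Finset (Fin n))}
    (hE : IsRGraph 2 n E) (hE₀ : IsRGraph 2 n E₀) (hd : Disjoint E E₀)
    {m : ℕ} {W : Finset (Fin n)} (hW : W.card = m)
    (hcard : exStar v F m < (E.filter (fun e => e ⊆ W)).card) :
    ∃ XW ⊆ E.filter (fun e => e ⊆ W), ∃ U, U ⊆ W ∧
      IsInducedCopyAt 2 v n F (E₀ ∪ XW) U := by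
  set g : Fin m ↪ Fin n := (W.orderEmbOfFin hW).toEmbedding with hg
  have hrange : Finset.univ.map g = W := by
    ext x
    simp only [Finset.mem_map, Finset.mem_univ, true_and]
    constructor
    · rintro ⟨i, rfl⟩; exact W.orderEmbOfFin_mem hW i
    · intro hx
      have : x ∈ Set.range (W.orderEmbOfFin hW) := by
        rw [Finset.range_orderEmbOfFin]; exact hx
      obtain ⟨i, hi⟩ := this
      exact ⟨i, hi⟩
  have hcard' : exStar v F m < (resG g E).card := by
    rw [card_resG g hE, hrange]; exact hcard
  obtain ⟨X', hX'sub, U', f, hfU, hfcopy⟩ :=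
    exists_break (resG_isRGraph g E) (resG_isRGraph g E₀) (resG_disjoint g hd) hcard'
  refine ⟨X'.map (Finset.mapEmbedding g).toEmbedding, ?_, U'.map g, ?_, f.trans g, ?_, ?_⟩
  · intro b hb
    simp only [Finset.mem_map, Finset.mapEmbedding_apply] at hb
    obtain ⟨a, ha, rfl⟩ := hb
    have ha' := hX'sub ha
    simp only [resG, Finset.mem_filter] at ha'
    refine Finset.mem_filter.mpr ⟨ha'.2, ?_⟩
    rw [← hrange]
    exact Finset.map_subset_map.mpr (Finset.subset_univ a)
  · rw [← hrange]; exact Finset.map_subset_map.mpr (Finset.subset_univ U')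
  · rw [← Finset.map_map, hfU]
  · intro e he
    rw [hfcopy e he, ← Finset.map_map]
    have hcard2 : (e.map f).card = 2 := by rw [Finset.card_map]; exact he
    constructor
    · intro h
      rcases Finset.mem_union.mp h with h | h
      · simp only [resG, Finset.mem_filter] at h
        exact Finset.mem_union_left _ h.2
      · refine Finset.mem_union_right _ ?_
        simp only [Finset.mem_map, Finset.mapEmbedding_apply]
        exact ⟨_, h, rfl⟩
    · intro h
      rcases Finset.mem_union.mp h with h | h
      · refine Finset.mem_union_left _ ?_
        simp only [resG, Finset.mem_filter, mem_edgeUniv]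
        exact ⟨hcard2, h⟩
      · refine Finset.mem_union_right _ ?_
        simp only [Finset.mem_map, Finset.mapEmbedding_apply] at h
        obtain ⟨a, ha, hae⟩ := h
        rwa [Finset.map_injective g hae] at ha

lemma extend_copy {v n : ℕ} {F : Finset (Finset (Fin v))}
    {E₀ X XW EW : Finset (Finset (Fin n))} {W U : Finset (Fin n)}
    (hXEW : X ∩ EW = XW) (hXW : ∀ e ∈ X, e ⊆ W → e ∈ EW) (hUW : U ⊆ W)
    (hcopy : IsInducedCopyAt 2 v n F (E₀ ∪ XW) U) :
    IsInducedCopyAt 2 v n F (E₀ ∪ X) U := by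
  obtain ⟨f, hfU, hf⟩ := hcopy
  refine ⟨f, hfU, fun e he => ?_⟩
  rw [hf e he]
  have hsub : e.map f ⊆ W := by
    intro x hx
    apply hUW
    rw [← hfU]
    exact Finset.map_subset_map.mpr (Finset.subset_univ e) hx
  constructor
  · intro h
    rcases Finset.mem_union.mp h with h | h
    · exact Finset.mem_union_left _ h
    · refine Finset.mem_union_right _ ?_
      rw [← hXEW] at h
      exact (Finset.mem_inter.mp h).1
  · intro h
    rcases Finset.mem_union.mp h with h | h
    · exact Finset.mem_union_left _ h
    · refine Finset.mem_union_right _ ?_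
      rw [← hXEW]
      exact Finset.mem_inter.mpr ⟨h, hXW _ h hsub⟩

lemma card_supersets {n m : ℕ} (A : Finset (Fin n)) (hm : A.card ≤ m) :
    ((Finset.powersetCard m (Finset.univ : Finset (Fin n))).filter
      (fun W => A ⊆ W)).card = (n - A.card).choose (m - A.card) := by
  have h : ((Finset.powersetCard m (Finset.univ : Finset (Fin n))).filter
      (fun W => A ⊆ W)).card
      = (Finset.powersetCard (m - A.card) (Finset.univ \ A)).card := by
    apply Finset.card_nbij' (fun W => W \ A) (fun Y => Y ∪ A)
    · intro W hW
      simp only [Finset.mem_coe, Finset.mem_filter, Finset.mem_powersetCard] at hW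
      obtain ⟨⟨-, hcard⟩, hAW⟩ := hW
      refine Finset.mem_powersetCard.mpr ⟨Finset.sdiff_subset_sdiff (Finset.subset_univ W)
        (Finset.Subset.refl A), ?_⟩
      rw [Finset.card_sdiff_of_subset hAW, hcard]
    · intro Y hY
      simp only [Finset.mem_coe, Finset.mem_powersetCard] at hY
      obtain ⟨hYsub, hYcard⟩ := hY
      have hdisj : Disjoint Y A := by
        intro t htY htA
        intro x hx
        have := hYsub (htY hx)
        simp only [Finset.mem_sdiff] at this
        exact absurd (htA hx) this.2
      refine Finset.mem_filter.mpr ⟨Finset.mem_powersetCard.mpr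
        ⟨Finset.subset_univ _, ?_⟩, Finset.subset_union_right⟩
      rw [Finset.card_union_of_disjoint hdisj, hYcard, Nat.sub_add_cancel hm]
    · intro W hW
      simp only [Finset.mem_coe, Finset.mem_filter] at hW
      exact Finset.sdiff_union_of_subset hW.2
    · intro Y hY
      simp only [Finset.mem_coe, Finset.mem_powersetCard] at hY
      have hdisj : Disjoint Y A := by
        intro t htY htA
        intro x hx
        have := hY.1 (htY hx)
        simp only [Finset.mem_sdiff] at this
        exact absurd (htA hx) this.2
      beta_reduce
      rw [Finset.union_sdiff_distrib, Finset.sdiff_eq_self_iff_disjoint.mpr hdisj,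
        Finset.sdiff_eq_empty_iff_subset.mpr (Finset.Subset.refl A), Finset.union_empty]
  rw [h, Finset.card_powersetCard, Finset.card_sdiff_of_subset (Finset.subset_univ A),
    Finset.card_univ, Fintype.card_fin]

lemma sum_EW {n m : ℕ} {E : Finset (Finset (Fin n))} (hE : IsRGraph 2 n E) (hm : 2 ≤ m) :
    ∑ W ∈ Finset.powersetCard m (Finset.univ : Finset (Fin n)),
      (E.filter (fun e => e ⊆ W)).card = E.card * (n - 2).choose (m - 2) := by
  calc ∑ W ∈ Finset.powersetCard m (Finset.univ : Finset (Fin n)),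
        (E.filter (fun e => e ⊆ W)).card
      = ∑ W ∈ Finset.powersetCard m (Finset.univ : Finset (Fin n)),
        ∑ e ∈ E, if e ⊆ W then 1 else 0 := by
        refine Finset.sum_congr rfl fun W _ => ?_
        rw [Finset.card_filter]
    _ = ∑ e ∈ E, ∑ W ∈ Finset.powersetCard m (Finset.univ : Finset (Fin n)),
        if e ⊆ W then 1 else 0 := Finset.sum_comm
    _ = ∑ e ∈ E, ((Finset.powersetCard m (Finset.univ : Finset (Fin n))).filter
        (fun W => e ⊆ W)).card := by
        refine Finset.sum_congr rfl fun e _ => ?_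
        rw [Finset.card_filter]
    _ = ∑ _e ∈ E, (n - 2).choose (m - 2) := by
        refine Finset.sum_congr rfl fun e he => ?_
        have hcard : e.card = 2 := mem_edgeUniv.mp (hE he)
        rw [card_supersets e (by omega), hcard]
    _ = E.card * (n - 2).choose (m - 2) := by
        rw [Finset.sum_const, smul_eq_mul]

lemma card_extensions {n : ℕ} {E EW XW : Finset (Finset (Fin n))}
    (hEW : EW ⊆ E) (hXW : XW ⊆ EW) :
    (E.powerset.filter (fun X => X ∩ EW = XW)).card = 2 ^ (E \ EW).card := by
  have h : (E.powerset.filter (fun X => X ∩ EW = XW)).card = (E \ EW).powerset.card := by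
    apply Finset.card_nbij' (fun X => X \ EW) (fun Y => Y ∪ XW)
    · intro X hX
      simp only [Finset.mem_coe, Finset.mem_filter, Finset.mem_powerset] at hX
      exact Finset.mem_powerset.mpr
        (Finset.sdiff_subset_sdiff hX.1 (Finset.Subset.refl EW))
    · intro Y hY
      simp only [Finset.mem_coe, Finset.mem_powerset] at hY
      have hYd : Disjoint Y EW := by
        refine Finset.disjoint_left.mpr fun a ha ha' => ?_
        have := hY ha
        simp only [Finset.mem_sdiff] at this
        exact this.2 ha'
      refine Finset.mem_filter.mpr ⟨Finset.mem_powerset.mpr ?_, ?_⟩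
      · exact Finset.union_subset (hY.trans Finset.sdiff_subset) (hXW.trans hEW)
      · rw [Finset.union_inter_distrib_right,
          Finset.disjoint_iff_inter_eq_empty.mp hYd,
          Finset.inter_eq_left.mpr hXW, Finset.empty_union]
    · intro X hX
      simp only [Finset.mem_coe, Finset.mem_filter, Finset.mem_powerset] at hX
      beta_reduce
      rw [← hX.2, Finset.sdiff_union_inter]
    · intro Y hY
      simp only [Finset.mem_coe, Finset.mem_powerset] at hY
      have hYd : Disjoint Y EW := by
        refine Finset.disjoint_left.mpr fun a ha ha' => ?_
        have := hY ha
        simp only [Finset.mem_sdiff] at this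
        exact this.2 ha'
      beta_reduce
      rw [Finset.union_sdiff_distrib, Finset.sdiff_eq_self_iff_disjoint.mpr hYd,
        Finset.sdiff_eq_empty_iff_subset.mpr hXW, Finset.union_empty]
  rw [h, Finset.card_powerset]

set_option maxHeartbeats 1000000 in
/-- **Corollary.** For a `2`-graph `F` on `v` vertices and `ε > 0` there are `n₀` and
`δ > 0` such that for `n > n₀`: if `E` is a graph on `n` vertices with at least
`ex*(n,F) + ε C(n,2)` edges, then for every edge set `E₀` disjoint from `E` there is
`X ⊆ E` such that `(V, E₀ ∪ X)` contains at least `δ n^v` induced copies of `F`. -/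
theorem stmt_4 (v : ℕ) (F : Finset (Finset (Fin v))) (hF : IsRGraph 2 v F)
    (ε : ℝ) (hε : 0 < ε) :
    ∃ (n₀ : ℕ) (δ : ℝ), 0 < δ ∧ ∀ n, n₀ < n →
      ∀ E : Finset (Finset (Fin n)), IsRGraph 2 n E →
      (exStar v F n : ℝ) + ε * (n.choose 2 : ℝ) ≤ E.card →
      ∀ E₀ : Finset (Finset (Fin n)), IsRGraph 2 n E₀ → Disjoint E₀ E →
      ∃ X ⊆ E, δ * (n : ℝ) ^ v ≤
        (Set.ncard {U : Finset (Fin n) | IsInducedCopyAt 2 v n F (E₀ ∪ X) U} : ℝ) := by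
  classical
  set d : ℕ → ℝ := fun k => (exStar v F k : ℝ) / (k.choose 2 : ℝ) with hd
  set S : Set ℝ := d '' {k | max v 2 ≤ k} with hS
  have hSne : S.Nonempty := ⟨d (max v 2), ⟨max v 2, by simp, rfl⟩⟩
  have hSbdd : BddBelow S := by
    refine ⟨0, ?_⟩
    rintro x ⟨k, -, rfl⟩
    positivity
  obtain ⟨x, ⟨m, hm, rfl⟩, hx⟩ := Real.lt_sInf_add_pos hSne (half_pos hε)
  simp only [Set.mem_setOf_eq, max_le_iff] at hm
  obtain ⟨hv2, h2m⟩ := hm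
  have hCpos : 0 < m.choose 2 := Nat.choose_pos h2m
  have hCmv : 0 < m.choose v := Nat.choose_pos hv2
  refine ⟨max m (2 * v),
    ε / 2 * ((2 ^ m.choose 2 : ℝ) * (m.choose v : ℝ) * (v.factorial : ℝ) * 2 ^ v)⁻¹, ?_, ?_⟩
  · have h2 : (0:ℝ) < (m.choose v : ℝ) := by exact_mod_cast hCmv
    have h3 : (0:ℝ) < (v.factorial : ℝ) := by exact_mod_cast v.factorial_pos
    positivity
  intro n hn E hE hEcard E₀ hE₀ hdisj
  have hmn : m ≤ n := le_of_lt (lt_of_le_of_lt (le_max_left _ _) hn)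
  have h2vn : 2 * v ≤ n := le_of_lt (lt_of_le_of_lt (le_max_right _ _) hn)
  have h2n : 2 ≤ n := le_trans h2m hmn
  have hvn : v ≤ n := le_trans hv2 hmn
  have hn2 : (0:ℝ) < (n.choose 2 : ℝ) := by
    exact_mod_cast Nat.choose_pos h2n
  have hCR : (0:ℝ) < (m.choose 2 : ℝ) := by exact_mod_cast hCpos
  have ha0 : (0:ℝ) ≤ (exStar v F m : ℝ) := by positivity
  have haC : (exStar v F m : ℝ) ≤ (m.choose 2 : ℝ) := by
    exact_mod_cast exStar_le_choose v F m
  -- Step 1 : d m ≤ |E|/n2 - ε/2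
  have hLn : sInf S ≤ d n := csInf_le hSbdd ⟨n, by
    simp only [Set.mem_setOf_eq, max_le_iff]
    exact ⟨hvn, h2n⟩, rfl⟩
  have hdn : d n ≤ (E.card : ℝ) / (n.choose 2 : ℝ) - ε := by
    have h1 : (exStar v F n : ℝ) ≤ (E.card : ℝ) - ε * (n.choose 2 : ℝ) := by linarith
    calc d n = (exStar v F n : ℝ) / (n.choose 2 : ℝ) := rfl
      _ ≤ ((E.card : ℝ) - ε * (n.choose 2 : ℝ)) / (n.choose 2 : ℝ) :=
          div_le_div_of_nonneg_right h1 hn2.le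
      _ = (E.card : ℝ) / (n.choose 2 : ℝ) - ε := by
          rw [sub_div, mul_div_cancel_right₀ _ (ne_of_gt hn2)]
  have hdm : d m ≤ (E.card : ℝ) / (n.choose 2 : ℝ) - ε / 2 := by linarith
  -- hkey : cleared of divisions
  have hkey : (exStar v F m : ℝ) * (n.choose 2 : ℝ)
      + ε / 2 * (m.choose 2 : ℝ) * (n.choose 2 : ℝ)
      ≤ (m.choose 2 : ℝ) * (E.card : ℝ) := by
    have h1 : (exStar v F m : ℝ) ≤ ((E.card : ℝ) / (n.choose 2 : ℝ) - ε / 2)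
        * (m.choose 2 : ℝ) := by
      have := hdm
      rw [hd] at this
      simp only at this
      rw [div_le_iff₀ hCR] at this
      exact this
    have h2 : (exStar v F m : ℝ) * (n.choose 2 : ℝ)
        ≤ (((E.card : ℝ) / (n.choose 2 : ℝ) - ε / 2) * (m.choose 2 : ℝ))
          * (n.choose 2 : ℝ) :=
      mul_le_mul_of_nonneg_right h1 hn2.le
    have h3 : (((E.card : ℝ) / (n.choose 2 : ℝ) - ε / 2) * (m.choose 2 : ℝ))
        * (n.choose 2 : ℝ)
        = (m.choose 2 : ℝ) * (E.card : ℝ)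
          - ε / 2 * (m.choose 2 : ℝ) * (n.choose 2 : ℝ) := by
      field_simp
    linarith
  -- Step 2 : many good m-sets
  set EW : Finset (Fin n) → Finset (Finset (Fin n)) :=
    fun W => E.filter (fun e => e ⊆ W) with hEWdef
  set P : Finset (Finset (Fin n)) := Finset.powersetCard m (Finset.univ : Finset (Fin n))
    with hPdef
  set Good : Finset (Finset (Fin n)) :=
    P.filter (fun W => exStar v F m < (EW W).card) with hGooddef
  have hPcard : P.card = n.choose m := by
    rw [hPdef, Finset.card_powersetCard, Finset.card_univ, Fintype.card_fin]
  have hEWle : ∀ W ∈ P, (EW W).card ≤ m.choose 2 := by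
    intro W hW
    have hWm : W.card = m := (Finset.mem_powersetCard.mp hW).2
    have hsub : EW W ⊆ W.powersetCard 2 := by
      intro e he
      rw [hEWdef] at he
      simp only [Finset.mem_filter] at he
      exact Finset.mem_powersetCard.mpr ⟨he.2, mem_edgeUniv.mp (hE he.1)⟩
    calc (EW W).card ≤ (W.powersetCard 2).card := Finset.card_le_card hsub
      _ = m.choose 2 := by rw [Finset.card_powersetCard, hWm]
  set Bad : Finset (Finset (Fin n)) :=
    P.filter (fun W => ¬ exStar v F m < (EW W).card) with hBaddef
  have hGB : Good.card + Bad.card = n.choose m := by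
    rw [hGooddef, hBaddef, Finset.card_filter_add_card_filter_not, hPcard]
  have hsplitN : E.card * (n - 2).choose (m - 2)
      ≤ Good.card * m.choose 2 + Bad.card * exStar v F m := by
    have h0 : ∑ W ∈ P, (EW W).card = E.card * (n - 2).choose (m - 2) := sum_EW hE h2m
    rw [← h0, ← Finset.sum_filter_add_sum_filter_not P
      (fun W => exStar v F m < (EW W).card) (fun W => (EW W).card)]
    have h1 : ∑ W ∈ Good, (EW W).card ≤ Good.card * m.choose 2 := by
      rw [hGooddef]
      calc ∑ W ∈ P.filter (fun W => exStar v F m < (EW W).card), (EW W).card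
          ≤ ∑ _W ∈ P.filter (fun W => exStar v F m < (EW W).card), m.choose 2 :=
            Finset.sum_le_sum fun W hW => hEWle W (Finset.filter_subset _ _ hW)
        _ = _ := by rw [Finset.sum_const, smul_eq_mul]
    have h2 : ∑ W ∈ Bad, (EW W).card ≤ Bad.card * exStar v F m := by
      rw [hBaddef]
      calc ∑ W ∈ P.filter (fun W => ¬ exStar v F m < (EW W).card), (EW W).card
          ≤ ∑ _W ∈ P.filter (fun W => ¬ exStar v F m < (EW W).card), exStar v F m :=
            Finset.sum_le_sum fun W hW =>
              Nat.le_of_not_lt (Finset.mem_filter.mp hW).2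
        _ = _ := by rw [Finset.sum_const, smul_eq_mul]
    exact Nat.add_le_add h1 h2
  have hid : ((n.choose m : ℝ)) * (m.choose 2 : ℝ)
      = (n.choose 2 : ℝ) * ((n - 2).choose (m - 2) : ℝ) := by
    exact_mod_cast congrArg (Nat.cast (R := ℝ)) (Nat.choose_mul (n := n) h2m)
  have hGood : ε / 2 * (n.choose m : ℝ) ≤ (Good.card : ℝ) := by
    have hsumR : (E.card : ℝ) * ((n - 2).choose (m - 2) : ℝ)
        ≤ (Good.card : ℝ) * (m.choose 2 : ℝ) + (Bad.card : ℝ) * (exStar v F m : ℝ) := by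
      exact_mod_cast hsplitN
    have hGBR : (Good.card : ℝ) + (Bad.card : ℝ) = (n.choose m : ℝ) := by
      exact_mod_cast hGB
    have hc2' : (0:ℝ) ≤ ((n - 2).choose (m - 2) : ℝ) := by positivity
    have hg0 : (0:ℝ) ≤ (Good.card : ℝ) := by positivity
    have hb0 : (0:ℝ) ≤ (Bad.card : ℝ) := by positivity
    -- multiply hkey by c2' and hsumR by CR, use hid
    have t1 : ((exStar v F m : ℝ) * (n.choose 2 : ℝ)
        + ε / 2 * (m.choose 2 : ℝ) * (n.choose 2 : ℝ)) * ((n - 2).choose (m - 2) : ℝ)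
        ≤ (m.choose 2 : ℝ) * (E.card : ℝ) * ((n - 2).choose (m - 2) : ℝ) :=
      mul_le_mul_of_nonneg_right hkey hc2'
    have t2 : (m.choose 2 : ℝ) * ((E.card : ℝ) * ((n - 2).choose (m - 2) : ℝ))
        ≤ (m.choose 2 : ℝ) * ((Good.card : ℝ) * (m.choose 2 : ℝ)
          + (Bad.card : ℝ) * (exStar v F m : ℝ)) :=
      mul_le_mul_of_nonneg_left hsumR hCR.le
    have t3 : ((exStar v F m : ℝ) + ε / 2 * (m.choose 2 : ℝ)) * ((n.choose m : ℝ)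
        * (m.choose 2 : ℝ))
        ≤ (m.choose 2 : ℝ) * ((Good.card : ℝ) * (m.choose 2 : ℝ)
          + (Bad.card : ℝ) * (exStar v F m : ℝ)) := by
      rw [hid]
      nlinarith [t1, t2]
    have e1 : (Bad.card : ℝ) = (n.choose m : ℝ) - (Good.card : ℝ) := by linarith
    rw [e1] at t3
    have t5 : ε / 2 * (m.choose 2 : ℝ) * (n.choose m : ℝ) * (m.choose 2 : ℝ)
        ≤ (Good.card : ℝ) * (m.choose 2 : ℝ) * (m.choose 2 : ℝ)
          - (m.choose 2 : ℝ) * (exStar v F m : ℝ) * (Good.card : ℝ) := by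
      nlinarith [t3]
    have t6 : (0:ℝ) ≤ (m.choose 2 : ℝ) * (exStar v F m : ℝ) * (Good.card : ℝ) :=
      mul_nonneg (mul_nonneg hCR.le ha0) hg0
    have t7 : (ε / 2 * (n.choose m : ℝ)) * ((m.choose 2 : ℝ) * (m.choose 2 : ℝ))
        ≤ (Good.card : ℝ) * ((m.choose 2 : ℝ) * (m.choose 2 : ℝ)) := by nlinarith [t5, t6]
    exact le_of_mul_le_mul_right t7 (mul_pos hCR hCR)
  -- Step 3 : choose witnesses for each good W
  have hPgood : ∀ W ∈ Good, ∃ XW U, XW ⊆ EW W ∧ U ⊆ W ∧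
      IsInducedCopyAt 2 v n F (E₀ ∪ XW) U := by
    intro W hW
    rw [hGooddef, Finset.mem_filter] at hW
    obtain ⟨hWP, hWlt⟩ := hW
    have hWm : W.card = m := (Finset.mem_powersetCard.mp hWP).2
    obtain ⟨XW, hXWsub, U, hUW, hcopy⟩ := good_subset hE hE₀ hdisj.symm hWm hWlt
    exact ⟨XW, U, hXWsub, hUW, hcopy⟩
  choose! XW UW hXWsub hUWsub hXWcopy using hPgood
  -- Step 4 : averaging over X ⊆ E
  have hsum2 : Good.card * 2 ^ E.card
      ≤ ∑ X ∈ E.powerset,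
          (Good.filter (fun W => X ∩ EW W = XW W)).card * 2 ^ m.choose 2 := by
    have hswap : ∑ X ∈ E.powerset, (Good.filter (fun W => X ∩ EW W = XW W)).card
        = ∑ W ∈ Good, (E.powerset.filter (fun X => X ∩ EW W = XW W)).card := by
      calc ∑ X ∈ E.powerset, (Good.filter (fun W => X ∩ EW W = XW W)).card
          = ∑ X ∈ E.powerset, ∑ W ∈ Good, if X ∩ EW W = XW W then 1 else 0 := by
            refine Finset.sum_congr rfl fun X _ => ?_
            rw [Finset.card_filter]
        _ = ∑ W ∈ Good, ∑ X ∈ E.powerset, if X ∩ EW W = XW W then 1 else 0 :=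
            Finset.sum_comm
        _ = _ := by
            refine Finset.sum_congr rfl fun W _ => ?_
            rw [Finset.card_filter]
    have hper : ∀ W ∈ Good,
        2 ^ E.card ≤ (E.powerset.filter (fun X => X ∩ EW W = XW W)).card
          * 2 ^ m.choose 2 := by
      intro W hW
      have hEWsub : EW W ⊆ E := Finset.filter_subset _ _
      rw [card_extensions hEWsub (hXWsub W hW), ← pow_add]
      apply Nat.pow_le_pow_right (by norm_num)
      have h1 : (E \ EW W).card = E.card - (EW W).card := Finset.card_sdiff_of_subset hEWsub
      have h2 : (EW W).card ≤ m.choose 2 :=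
        hEWle W (Finset.mem_filter.mp (hGooddef ▸ hW)).1
      have h3 : (EW W).card ≤ E.card := Finset.card_le_card hEWsub
      omega
    calc Good.card * 2 ^ E.card = ∑ _W ∈ Good, 2 ^ E.card := by
          rw [Finset.sum_const, smul_eq_mul]
      _ ≤ ∑ W ∈ Good, (E.powerset.filter (fun X => X ∩ EW W = XW W)).card
          * 2 ^ m.choose 2 := Finset.sum_le_sum hper
      _ = (∑ W ∈ Good, (E.powerset.filter (fun X => X ∩ EW W = XW W)).card)
          * 2 ^ m.choose 2 := by rw [Finset.sum_mul]
      _ = _ := by rw [← hswap, Finset.sum_mul]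
  -- pigeonhole
  have hpow : ∑ X ∈ E.powerset, Good.card
      ≤ ∑ X ∈ E.powerset,
          (Good.filter (fun W => X ∩ EW W = XW W)).card * 2 ^ m.choose 2 := by
    calc ∑ _X ∈ E.powerset, Good.card = 2 ^ E.card * Good.card := by
          rw [Finset.sum_const, smul_eq_mul, Finset.card_powerset]
      _ = Good.card * 2 ^ E.card := mul_comm _ _
      _ ≤ _ := hsum2
  obtain ⟨X, hXpow, hXcnt⟩ :=
    Finset.exists_le_of_sum_le ⟨∅, Finset.empty_mem_powerset E⟩ hpow
  have hXE : X ⊆ E := Finset.mem_powerset.mp hXpow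
  refine ⟨X, hXE, ?_⟩
  -- Step 5 : the image of the chosen U's
  set T : Finset (Finset (Fin n)) := Good.filter (fun W => X ∩ EW W = XW W) with hTdef
  set I : Finset (Finset (Fin n)) := T.image UW with hIdef
  have hTGood : T ⊆ Good := Finset.filter_subset _ _
  have hUcard : ∀ W ∈ Good, (UW W).card = v := by
    intro W hW
    obtain ⟨f, hfU, -⟩ := hXWcopy W hW
    rw [← hfU, Finset.card_map, Finset.card_univ, Fintype.card_fin]
  have hfib : ∀ U ∈ I, (T.filter (fun W => UW W = U)).card ≤ (n - v).choose (m - v) := by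
    intro U hU
    obtain ⟨W₀, hW₀T, rfl⟩ := Finset.mem_image.mp hU
    have hUv : (UW W₀).card = v := hUcard W₀ (hTGood hW₀T)
    have hsub : T.filter (fun W => UW W = UW W₀)
        ⊆ P.filter (fun W => UW W₀ ⊆ W) := by
      intro W hW
      obtain ⟨hWT, hWeq⟩ := Finset.mem_filter.mp hW
      have hWGood := hTGood hWT
      have hWP : W ∈ P := (Finset.mem_filter.mp (hGooddef ▸ hWGood)).1
      refine Finset.mem_filter.mpr ⟨hWP, ?_⟩
      rw [← hWeq]
      exact hUWsub W hWGood
    calc (T.filter (fun W => UW W = UW W₀)).card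
        ≤ (P.filter (fun W => UW W₀ ⊆ W)).card := Finset.card_le_card hsub
      _ = (n - (UW W₀).card).choose (m - (UW W₀).card) :=
          card_supersets (UW W₀) (hUv ▸ hv2)
      _ = (n - v).choose (m - v) := by rw [hUv]
  have hTI : T.card ≤ (n - v).choose (m - v) * I.card :=
    Finset.card_le_mul_card_image T _ hfib
  have hIcopy : ∀ U ∈ I, IsInducedCopyAt 2 v n F (E₀ ∪ X) U := by
    intro U hU
    obtain ⟨W, hWT, rfl⟩ := Finset.mem_image.mp hU
    obtain ⟨hWGood, hWX⟩ := Finset.mem_filter.mp hWT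
    refine extend_copy hWX ?_ (hUWsub W hWGood) (hXWcopy W hWGood)
    intro e he hsub
    rw [hEWdef]
    exact Finset.mem_filter.mpr ⟨hXE he, hsub⟩
  have hIncard : (I.card : ℝ)
      ≤ (Set.ncard {U : Finset (Fin n) | IsInducedCopyAt 2 v n F (E₀ ∪ X) U} : ℝ) := by
    have h1 : (↑I : Set (Finset (Fin n)))
        ⊆ {U : Finset (Fin n) | IsInducedCopyAt 2 v n F (E₀ ∪ X) U} := by
      intro U hU
      exact hIcopy U (by exact_mod_cast hU)
    have h2 := Set.ncard_le_ncard h1 (Set.toFinite _)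
    rw [Set.ncard_coe_finset] at h2
    exact_mod_cast h2
  -- Step 6 : final arithmetic
  have hBpos : 0 < (n - v).choose (m - v) :=
    Nat.choose_pos (by omega)
  have hA4 : ((n.choose m : ℝ)) * (m.choose v : ℝ)
      = (n.choose v : ℝ) * ((n - v).choose (m - v) : ℝ) := by
    exact_mod_cast congrArg (Nat.cast (R := ℝ)) (Nat.choose_mul (n := n) hv2)
  have hA5 : (n : ℝ) ^ v ≤ 2 ^ v * (v.factorial : ℝ) * (n.choose v : ℝ) := by
    have hnat : n ^ v ≤ 2 ^ v * (v.factorial * n.choose v) := by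
      calc n ^ v ≤ (2 * (n + 1 - v)) ^ v := Nat.pow_le_pow_left (by omega) v
        _ = 2 ^ v * (n + 1 - v) ^ v := by rw [mul_pow]
        _ ≤ 2 ^ v * n.descFactorial v :=
            Nat.mul_le_mul_left _ (Nat.pow_sub_le_descFactorial n v)
        _ = 2 ^ v * (v.factorial * n.choose v) := by
            rw [Nat.descFactorial_eq_factorial_mul_choose]
    calc (n : ℝ) ^ v = ((n ^ v : ℕ) : ℝ) := by push_cast; ring
      _ ≤ ((2 ^ v * (v.factorial * n.choose v) : ℕ) : ℝ) := by exact_mod_cast hnat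
      _ = 2 ^ v * (v.factorial : ℝ) * (n.choose v : ℝ) := by push_cast; ring
  have hA2 : (Good.card : ℝ) ≤ (T.card : ℝ) * (2 ^ m.choose 2 : ℝ) := by
    have : Good.card ≤ T.card * 2 ^ m.choose 2 := hXcnt
    exact_mod_cast this
  have hA3 : (T.card : ℝ) ≤ ((n - v).choose (m - v) : ℝ) * (I.card : ℝ) := by
    exact_mod_cast hTI
  have hBposR : (0:ℝ) < ((n - v).choose (m - v) : ℝ) := by exact_mod_cast hBpos
  have hCmvR : (0:ℝ) < (m.choose v : ℝ) := by exact_mod_cast hCmv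
  have hkpos : (0:ℝ) < (2 ^ m.choose 2 : ℝ) := by positivity
  have hI0 : (0:ℝ) ≤ (I.card : ℝ) := by positivity
  -- chain:  ε/2 * C(n,m) ≤ κ * B * |I|
  have h6 : ε / 2 * (n.choose m : ℝ)
      ≤ (2 ^ m.choose 2 : ℝ) * (((n - v).choose (m - v) : ℝ) * (I.card : ℝ)) := by
    calc ε / 2 * (n.choose m : ℝ) ≤ (Good.card : ℝ) := hGood
      _ ≤ (T.card : ℝ) * (2 ^ m.choose 2 : ℝ) := hA2
      _ ≤ (((n - v).choose (m - v) : ℝ) * (I.card : ℝ)) * (2 ^ m.choose 2 : ℝ) :=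
          mul_le_mul_of_nonneg_right hA3 hkpos.le
      _ = _ := by ring
  have h7 : ε / 2 * (n.choose v : ℝ) * ((n - v).choose (m - v) : ℝ)
      ≤ (2 ^ m.choose 2 : ℝ) * (m.choose v : ℝ) * (I.card : ℝ)
        * ((n - v).choose (m - v) : ℝ) := by
    have := mul_le_mul_of_nonneg_right h6 hCmvR.le
    nlinarith [this, hA4]
  have h8 : ε / 2 * (n.choose v : ℝ)
      ≤ (2 ^ m.choose 2 : ℝ) * (m.choose v : ℝ) * (I.card : ℝ) := by
    have h7' : (ε / 2 * (n.choose v : ℝ)) * ((n - v).choose (m - v) : ℝ)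
        ≤ ((2 ^ m.choose 2 : ℝ) * (m.choose v : ℝ) * (I.card : ℝ))
          * ((n - v).choose (m - v) : ℝ) := by linarith
    exact le_of_mul_le_mul_right h7' hBposR
  have hfinal : ε / 2 * ((2 ^ m.choose 2 : ℝ) * (m.choose v : ℝ)
      * (v.factorial : ℝ) * 2 ^ v)⁻¹ * (n : ℝ) ^ v ≤ (I.card : ℝ) := by
    have hvfR : (0:ℝ) < (v.factorial : ℝ) := by exact_mod_cast v.factorial_pos
    have h2v : (0:ℝ) < (2:ℝ) ^ v := by positivity
    have hδ0 : (0:ℝ) ≤ ε / 2 * ((2 ^ m.choose 2 : ℝ) * (m.choose v : ℝ)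
        * (v.factorial : ℝ) * 2 ^ v)⁻¹ := by positivity
    calc ε / 2 * ((2 ^ m.choose 2 : ℝ) * (m.choose v : ℝ)
          * (v.factorial : ℝ) * 2 ^ v)⁻¹ * (n : ℝ) ^ v
        ≤ ε / 2 * ((2 ^ m.choose 2 : ℝ) * (m.choose v : ℝ)
          * (v.factorial : ℝ) * 2 ^ v)⁻¹
          * (2 ^ v * (v.factorial : ℝ) * (n.choose v : ℝ)) :=
          mul_le_mul_of_nonneg_left hA5 hδ0
      _ = ε / 2 * (n.choose v : ℝ)
          / ((2 ^ m.choose 2 : ℝ) * (m.choose v : ℝ)) := by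
          field_simp
      _ ≤ (I.card : ℝ) := by
          rw [div_le_iff₀ (by positivity)]
          linarith [h8]
  exact le_trans hfinal hIncard
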